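/- For finitely supported real sequences b = {b_I}, β = {β_J}, independent uniform ±1 random signs σ = {σ_J}, and any φ ∈ L²(ℝ), E ‖P^{0,1}_b (P^{σ,0,0}_β φ)‖_2² = Σ_{J∈𝒟} ⟨φ, h_J⟩² β_J² Σ_{I∈𝒟, I⊊J} b_I² · |I|/|J|. -/

import Mathlib

open MeasureTheory ProbabilityTheory Real Filter
open scoped ENNReal

attribute [local instance] Classical.propDecidable

noncomputable section

namespace RandomParaproducts

/-- Dyadic intervals: `(n, k)` represents `[k·2ⁿ, (k+1)·2ⁿ)`. -/
abbrev D : Type := ℤ × ℤ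

/-- The length `2ⁿ` of the dyadic interval `(n, k)`. -/
def len (I : D) : ℝ := (2 : ℝ) ^ I.1

/-- The dyadic interval `[k·2ⁿ, (k+1)·2ⁿ)` as a subset of `ℝ`. -/
def ival (I : D) : Set ℝ := Set.Ico ((I.2 : ℝ) * (2 : ℝ) ^ I.1) (((I.2 : ℝ) + 1) * (2 : ℝ) ^ I.1)

/-- The left half of a dyadic interval. -/
def lc (I : D) : D := (I.1 - 1, 2 * I.2)

/-- The right half of a dyadic interval. -/
def rc (I : D) : D := (I.1 - 1, 2 * I.2 + 1)

/-- The `L²`-normalized Haar function `h_I = h⁰_I`. -/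
def haar (I : D) : ℝ → ℝ := fun x =>
  (Real.sqrt (len I))⁻¹ *
    ((ival (rc I)).indicator (fun _ => (1 : ℝ)) x - (ival (lc I)).indicator (fun _ => (1 : ℝ)) x)

/-- The function `h¹_I = |h_I| = |I|^{-1/2} 1_I`. -/
def haar1 (I : D) : ℝ → ℝ := fun x =>
  (Real.sqrt (len I))⁻¹ * (ival I).indicator (fun _ => (1 : ℝ)) x

/-- `h^ε_I`, where `false` codes the exponent `0` and `true` codes the exponent `1`. -/
def hfun : Bool → D → ℝ → ℝ
  | false => haar
  | true => haar1

/-- The inner product `⟨f, g⟩ = ∫ f g` on `L²(ℝ)`. -/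
def ip (f g : ℝ → ℝ) : ℝ := ∫ x, f x * g x

/-- The paraproduct `P^{ε,δ}_b f = ∑_I b_I ⟨f, h^δ_I⟩ h^ε_I` with finitely supported
numerical symbol `b`. -/
def P (e d : Bool) (b : D →₀ ℝ) (f : ℝ → ℝ) : ℝ → ℝ := fun x =>
  ∑ I ∈ b.support, b I * ip f (hfun d I) * hfun e I x

/-- The signed paraproduct `P^{σ,ε,δ}_b f = ∑_I σ_I b_I ⟨f, h^δ_I⟩ h^ε_I`. -/
def Psig (σ : D → ℝ) (e d : Bool) (b : D →₀ ℝ) (f : ℝ → ℝ) : ℝ → ℝ := fun x =>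
  ∑ I ∈ b.support, σ I * (b I * ip f (hfun d I) * hfun e I x)

/-- The square of the `L²(ℝ)` norm, `‖g‖₂² = ∫ g²`. -/
def l2normSq (g : ℝ → ℝ) : ℝ := ∫ x, (g x) ^ 2

/-- The Carleson norm of a sequence `a` whose nonzero entries lie in the finite set `s`:
`sup_J (|J|⁻¹ ∑_{I ⊆ J} a_I² |I|)^{1/2}`. -/
def carlOn (s : Finset D) (a : D → ℝ) : ℝ :=
  ⨆ J : D, Real.sqrt ((len J)⁻¹ *
    ∑ I ∈ s.filter (fun I => ival I ⊆ ival J), (a I) ^ 2 * len I)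

/-- `μ` is the law of independent uniformly distributed random signs `{σ_I : I ∈ 𝒟}`. -/
def IsSignMeasure (μ : Measure (D → ℝ)) : Prop :=
  IsProbabilityMeasure μ ∧
    iIndepFun (fun I σ => σ I) μ ∧
    ∀ I : D, μ.map (fun σ => σ I) =
      (2⁻¹ : ℝ≥0∞) • (Measure.dirac (1 : ℝ) + Measure.dirac (-1 : ℝ))

/-- `f` is a unit vector of `L²(ℝ)`. -/
def UnitL2 (f : ℝ → ℝ) : Prop := MemLp f 2 volume ∧ eLpNorm f 2 volume = 1

/-- The operator norm on `L²(ℝ)` of a map defined on functions. -/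
def opNorm (T : (ℝ → ℝ) → ℝ → ℝ) : ℝ :=
  ⨆ f : {f : ℝ → ℝ // UnitL2 f}, Real.sqrt (l2normSq (T f.1))

/-- The averaged operator norm `sup_{‖f‖₂ = 1} (𝔼 ‖T_σ f‖₂²)^{1/2}`. -/
def avgOpNorm (μ : Measure (D → ℝ)) (T : (D → ℝ) → (ℝ → ℝ) → ℝ → ℝ) : ℝ :=
  ⨆ f : {f : ℝ → ℝ // UnitL2 f}, Real.sqrt (∫ σ, l2normSq (T σ f.1) ∂μ)

/-- `b` is the finite linear combination of Haar functions with coefficients `c`. -/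
def FinHaar (b : ℝ → ℝ) (c : D →₀ ℝ) : Prop :=
  b = fun x => ∑ I ∈ c.support, c I * haar I x

/-- The paraproduct `P^{ε,γ}_{b,α} f = ∑_{I} (⟨b, h^α_I⟩/|I|^{1/2}) ⟨f, h^γ_I⟩ h^ε_I` with
function symbol `b`, the sum extended over a finite set `s` containing all the
nonvanishing terms. -/
def Pb (s : Finset D) (e g a : Bool) (b : ℝ → ℝ) (f : ℝ → ℝ) : ℝ → ℝ := fun x =>
  ∑ I ∈ s, (ip b (hfun a I) / Real.sqrt (len I)) * ip f (hfun g I) * hfun e I x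

lemma measurableSet_ival (I : D) : MeasurableSet (ival I) := measurableSet_Ico

lemma volume_ival_ne_top (I : D) : volume (ival I) ≠ ⊤ := by
  simp only [ival, Real.volume_Ico]; exact ENNReal.ofReal_ne_top

lemma memℒp_haar (I : D) : MemLp (haar I) 2 volume := by
  have h1 : MemLp ((ival (rc I)).indicator (fun _ => (1 : ℝ))) 2 volume :=
    memLp_indicator_const 2 (measurableSet_ival _) 1 (Or.inr (volume_ival_ne_top _))
  have h2 : MemLp ((ival (lc I)).indicator (fun _ => (1 : ℝ))) 2 volume :=
    memLp_indicator_const 2 (measurableSet_ival _) 1 (Or.inr (volume_ival_ne_top _))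
  exact ((h1.sub h2).const_mul ((Real.sqrt (len I))⁻¹))

/-- The Haar function `h_I` as an element of `L²(ℝ)`. -/
def haarLp (I : D) : Lp ℝ 2 (volume : Measure ℝ) := (memℒp_haar I).toLp (haar I)

/-- The random Haar multiplier `T_σ f = ∑_{I ∈ 𝒟} σ_I ⟨f, h_I⟩ h_I`, as an element of
`L²(ℝ)`; the (infinite) sum converges unconditionally in `L²`. -/
def Tfull (σ : D → ℝ) (g : ℝ → ℝ) : Lp ℝ 2 (volume : Measure ℝ) :=
  ∑' I : D, (σ I * ip g (haar I)) • haarLp I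

/-- The composition `M_b T_σ M_β` applied to `f`, as a function. -/
def MbTM (σ : D → ℝ) (b β f : ℝ → ℝ) : ℝ → ℝ := fun x =>
  b x * (Tfull σ fun y => β y * f y) x

-- geometry scratch
lemma len_pos (I : D) : 0 < len I := zpow_pos (by norm_num) _

lemma sqrt_len_pos (I : D) : 0 < Real.sqrt (len I) := Real.sqrt_pos.2 (len_pos I)

lemma ival_eq (I : D) : ival I = Set.Ico ((I.2:ℝ) * len I) ((I.2:ℝ) * len I + len I) := by
  unfold ival len; congr 1; ring

lemma volume_ival (I : D) : volume (ival I) = ENNReal.ofReal (len I) := by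
  rw [ival, Real.volume_Ico]; congr 1; unfold len; ring

lemma vol_toReal (I : D) : (volume (ival I)).toReal = len I := by
  rw [volume_ival, ENNReal.toReal_ofReal (len_pos I).le]

lemma nonempty_ival (I : D) : (ival I).Nonempty := by
  rw [ival_eq]; exact Set.nonempty_Ico.2 (by nlinarith [len_pos I])

lemma len_lc (I : D) : len (lc I) = len I / 2 := by
  unfold len lc; simp only
  rw [zpow_sub_one₀ (by norm_num : (2:ℝ) ≠ 0)]; ring

lemma len_rc (I : D) : len (rc I) = len I / 2 := by
  unfold len rc; simp only
  rw [zpow_sub_one₀ (by norm_num : (2:ℝ) ≠ 0)]; ring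

lemma ival_lc (I : D) : ival (lc I) = Set.Ico ((I.2:ℝ) * len I) ((I.2:ℝ) * len I + len I / 2) := by
  rw [ival_eq, len_lc]; unfold lc; congr 1 <;> push_cast <;> ring

lemma ival_rc (I : D) :
    ival (rc I) = Set.Ico ((I.2:ℝ) * len I + len I / 2) ((I.2:ℝ) * len I + len I) := by
  rw [ival_eq, len_rc]; unfold rc; congr 1 <;> push_cast <;> ring

lemma disjoint_Ico_of_le {a b c d : ℝ} (h : b ≤ c) : Disjoint (Set.Ico a b) (Set.Ico c d) := by
  refine Set.disjoint_left.2 ?_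
  rintro x ⟨_, h2⟩ ⟨h3, _⟩; linarith

lemma disjoint_lc_rc (I : D) : Disjoint (ival (lc I)) (ival (rc I)) := by
  rw [ival_lc, ival_rc]; exact disjoint_Ico_of_le le_rfl

lemma union_lc_rc (I : D) : ival (lc I) ∪ ival (rc I) = ival I := by
  rw [ival_lc, ival_rc, ival_eq]
  exact Set.Ico_union_Ico_eq_Ico (by nlinarith [len_pos I]) (by nlinarith [len_pos I])

lemma lc_subset (I : D) : ival (lc I) ⊆ ival I := by
  intro x hx; rw [← union_lc_rc I]; exact Set.mem_union_left _ hx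

lemma rc_subset (I : D) : ival (rc I) ⊆ ival I := by
  intro x hx; rw [← union_lc_rc I]; exact Set.mem_union_right _ hx

lemma subset_or_disjoint {I J : D} (h : I.1 ≤ J.1) :
    ival I ⊆ ival J ∨ Disjoint (ival I) (ival J) := by
  set p : ℕ := (J.1 - I.1).toNat with hp
  have hpz : (p : ℤ) = J.1 - I.1 := Int.toNat_of_nonneg (by omega)
  have h2 : len J = len I * 2 ^ p := by
    unfold len
    rw [← zpow_natCast (2:ℝ) p, ← zpow_add₀ (by norm_num : (2:ℝ) ≠ 0)]
    congr 1; omega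
  have hlI := len_pos I
  by_cases h1 : I.2 < J.2 * 2 ^ p
  · right
    rw [ival_eq, ival_eq]
    refine disjoint_Ico_of_le ?_
    have : (I.2 : ℝ) + 1 ≤ (J.2 : ℝ) * 2 ^ p := by exact_mod_cast h1
    rw [h2]; nlinarith
  · by_cases h3 : (J.2 + 1) * 2 ^ p ≤ I.2
    · right
      rw [ival_eq, ival_eq]
      refine (disjoint_Ico_of_le ?_).symm
      have : ((J.2 : ℝ) + 1) * 2 ^ p ≤ (I.2 : ℝ) := by exact_mod_cast h3
      rw [h2]; nlinarith
    · left
      rw [ival_eq, ival_eq]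
      push_neg at h1 h3
      have e1 : (J.2 : ℝ) * 2 ^ p ≤ (I.2 : ℝ) := by exact_mod_cast h1
      have e2 : (I.2 : ℝ) + 1 ≤ ((J.2 : ℝ) + 1) * 2 ^ p := by exact_mod_cast h3
      refine Set.Ico_subset_Ico ?_ ?_ <;> rw [h2] <;> nlinarith

lemma disjoint_of_ne_same {I J : D} (h : I.1 = J.1) (h2 : I ≠ J) :
    Disjoint (ival I) (ival J) := by
  have hk : I.2 ≠ J.2 := by
    intro hk; exact h2 (Prod.ext h hk)
  have hlen : len I = len J := by unfold len; rw [h]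
  rcases lt_or_gt_of_ne hk with hlt | hlt
  · rw [ival_eq, ival_eq, ← hlen]
    refine disjoint_Ico_of_le ?_
    have : (I.2 : ℝ) + 1 ≤ (J.2 : ℝ) := by exact_mod_cast hlt
    nlinarith [len_pos I]
  · rw [ival_eq, ival_eq, ← hlen]
    refine (disjoint_Ico_of_le ?_).symm
    have : (J.2 : ℝ) + 1 ≤ (I.2 : ℝ) := by exact_mod_cast hlt
    nlinarith [len_pos I]

-- integrals scratch
abbrev indf (I : D) : ℝ → ℝ := (ival I).indicator (fun _ => (1:ℝ))

lemma indf_mul (I J : D) (x : ℝ) :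
    indf I x * indf J x = (ival I ∩ ival J).indicator (fun _ => (1:ℝ)) x := by
  by_cases hI : x ∈ ival I <;> by_cases hJ : x ∈ ival J <;>
    simp [indf, Set.indicator_apply, hI, hJ, Set.mem_inter_iff]

lemma integrable_ind {s : Set ℝ} (hs : MeasurableSet s) (h : volume s ≠ ⊤) :
    Integrable (s.indicator fun _ => (1:ℝ)) := by
  rw [integrable_indicator_iff hs]
  exact integrableOn_const h

lemma integrable_indf_mul (I J : D) : Integrable (fun x => indf I x * indf J x) := by
  simp only [indf_mul]
  exact integrable_ind ((measurableSet_ival I).inter (measurableSet_ival J))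
    (ne_top_of_le_ne_top (volume_ival_ne_top I) (measure_mono Set.inter_subset_left))

/-- volume of the intersection -/
def v (I J : D) : ℝ := (volume (ival I ∩ ival J)).toReal

lemma integral_indf_mul (I J : D) : ∫ x, indf I x * indf J x = v I J := by
  simp only [indf_mul]
  rw [MeasureTheory.integral_indicator_const _
    ((measurableSet_ival I).inter (measurableSet_ival J))]
  simp [v, Measure.real]

lemma v_subset {I J : D} (h : ival I ⊆ ival J) : v I J = len I := by
  rw [v, Set.inter_eq_left.2 h, vol_toReal]

lemma v_subset' {I J : D} (h : ival J ⊆ ival I) : v I J = len J := by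
  rw [v, Set.inter_eq_right.2 h, vol_toReal]

lemma v_disjoint {I J : D} (h : Disjoint (ival I) (ival J)) : v I J = 0 := by
  rw [v, Set.disjoint_iff_inter_eq_empty.1 h]; simp

lemma haar_expand (I J : D) : ∀ x, haar I x * haar J x =
    ((Real.sqrt (len I))⁻¹ * (Real.sqrt (len J))⁻¹) *
      ((indf (rc I) x * indf (rc J) x - indf (rc I) x * indf (lc J) x) -
       (indf (lc I) x * indf (rc J) x - indf (lc I) x * indf (lc J) x)) := by
  intro x; unfold haar indf; ring

lemma integrable_haar_mul (I J : D) : Integrable (fun x => haar I x * haar J x) := by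
  simp only [haar_expand]
  exact (((integrable_indf_mul _ _).sub (integrable_indf_mul _ _)).sub
    ((integrable_indf_mul _ _).sub (integrable_indf_mul _ _))).const_mul _

lemma ip_haar_haar (I J : D) : ip (haar I) (haar J) =
    (Real.sqrt (len I))⁻¹ * (Real.sqrt (len J))⁻¹ *
      ((v (rc I) (rc J) - v (rc I) (lc J)) - (v (lc I) (rc J) - v (lc I) (lc J))) := by
  unfold ip
  simp only [haar_expand]
  have i1 : Integrable (fun x => indf (rc I) x * indf (rc J) x - indf (rc I) x * indf (lc J) x) :=
    (integrable_indf_mul _ _).sub (integrable_indf_mul _ _)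
  have i2 : Integrable (fun x => indf (lc I) x * indf (rc J) x - indf (lc I) x * indf (lc J) x) :=
    (integrable_indf_mul _ _).sub (integrable_indf_mul _ _)
  rw [integral_const_mul, integral_sub i1 i2,
    integral_sub (integrable_indf_mul _ _) (integrable_indf_mul _ _),
    integral_sub (integrable_indf_mul _ _) (integrable_indf_mul _ _),
    integral_indf_mul, integral_indf_mul, integral_indf_mul, integral_indf_mul]

lemma haar_haar1_expand (J I : D) : ∀ x, haar J x * haar1 I x =
    ((Real.sqrt (len J))⁻¹ * (Real.sqrt (len I))⁻¹) *
      (indf (rc J) x * indf I x - indf (lc J) x * indf I x) := by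
  intro x; unfold haar haar1 indf; ring

lemma integrable_haar_haar1 (J I : D) : Integrable (fun x => haar J x * haar1 I x) := by
  simp only [haar_haar1_expand]
  exact ((integrable_indf_mul _ _).sub (integrable_indf_mul _ _)).const_mul _

lemma ip_haar_haar1 (J I : D) : ip (haar J) (haar1 I) =
    (Real.sqrt (len J))⁻¹ * (Real.sqrt (len I))⁻¹ * (v (rc J) I - v (lc J) I) := by
  unfold ip
  simp only [haar_haar1_expand]
  rw [integral_const_mul, integral_sub (integrable_indf_mul _ _) (integrable_indf_mul _ _),
    integral_indf_mul, integral_indf_mul]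

lemma ip_comm (f g : ℝ → ℝ) : ip f g = ip g f := by
  unfold ip
  congr 1; funext x; ring

lemma ip_haar_self (I : D) : ip (haar I) (haar I) = 1 := by
  rw [ip_haar_haar, v_subset (subset_refl _), v_subset (subset_refl _),
    v_disjoint (disjoint_lc_rc I).symm, v_disjoint (disjoint_lc_rc I),
    len_lc, len_rc, ← mul_inv, Real.mul_self_sqrt (len_pos I).le]
  have := len_pos I
  field_simp
  ring

lemma ip_haar_ne_aux {I J : D} (h : I.1 ≤ J.1) (hne : I ≠ J) : ip (haar I) (haar J) = 0 := by
  rcases eq_or_lt_of_le h with heq | hlt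
  · have hd : Disjoint (ival I) (ival J) := disjoint_of_ne_same heq hne
    rw [ip_haar_haar, v_disjoint (hd.mono (rc_subset I) (rc_subset J)),
      v_disjoint (hd.mono (rc_subset I) (lc_subset J)),
      v_disjoint (hd.mono (lc_subset I) (rc_subset J)),
      v_disjoint (hd.mono (lc_subset I) (lc_subset J))]
    ring
  · have h1 : I.1 ≤ (lc J).1 := by simp only [lc]; omega
    have h2 : I.1 ≤ (rc J).1 := by simp only [rc]; omega
    rcases subset_or_disjoint h1 with hl | hl
    · have hrr : Disjoint (ival (rc I)) (ival (rc J)) :=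
        ((disjoint_lc_rc J).mono_left ((rc_subset I).trans hl))
      have hlr : Disjoint (ival (lc I)) (ival (rc J)) :=
        ((disjoint_lc_rc J).mono_left ((lc_subset I).trans hl))
      rw [ip_haar_haar, v_disjoint hrr, v_disjoint hlr,
        v_subset ((rc_subset I).trans hl), v_subset ((lc_subset I).trans hl), len_lc, len_rc]
      ring
    · rcases subset_or_disjoint h2 with hr | hr
      · have hrl : Disjoint (ival (rc I)) (ival (lc J)) :=
          ((disjoint_lc_rc J).symm.mono_left ((rc_subset I).trans hr))
        have hll : Disjoint (ival (lc I)) (ival (lc J)) :=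
          ((disjoint_lc_rc J).symm.mono_left ((lc_subset I).trans hr))
        rw [ip_haar_haar, v_disjoint hrl, v_disjoint hll,
          v_subset ((rc_subset I).trans hr), v_subset ((lc_subset I).trans hr), len_lc, len_rc]
        ring
      · rw [ip_haar_haar, v_disjoint (hr.mono_left (rc_subset I)),
          v_disjoint (hl.mono_left (rc_subset I)), v_disjoint (hr.mono_left (lc_subset I)),
          v_disjoint (hl.mono_left (lc_subset I))]
        ring

lemma ip_haar (I J : D) : ip (haar I) (haar J) = if I = J then 1 else 0 := by
  by_cases h : I = J
  · rw [if_pos h, h, ip_haar_self]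
  · rw [if_neg h]
    rcases le_total I.1 J.1 with hle | hle
    · exact ip_haar_ne_aux hle h
    · rw [ip_comm]; exact ip_haar_ne_aux hle (Ne.symm h)

lemma ssubset_of_subset_lc {I J : D} (h : ival I ⊆ ival (lc J)) : ival I ⊂ ival J := by
  refine ⟨h.trans (lc_subset J), fun hJI => ?_⟩
  obtain ⟨x, hx⟩ := nonempty_ival (rc J)
  exact Set.disjoint_left.1 (disjoint_lc_rc J) (h (hJI (rc_subset J hx))) hx

lemma ssubset_of_subset_rc {I J : D} (h : ival I ⊆ ival (rc J)) : ival I ⊂ ival J := by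
  refine ⟨h.trans (rc_subset J), fun hJI => ?_⟩
  obtain ⟨x, hx⟩ := nonempty_ival (lc J)
  exact Set.disjoint_left.1 (disjoint_lc_rc J) hx (h (hJI (lc_subset J hx)))

lemma sq_helper {a b x : ℝ} (ha : 0 < a) (hb : 0 < b) :
    ((Real.sqrt a)⁻¹ * (Real.sqrt b)⁻¹ * x) ^ 2 = x ^ 2 / (a * b) := by
  rw [mul_pow, mul_pow, inv_pow, inv_pow, Real.sq_sqrt ha.le, Real.sq_sqrt hb.le]
  field_simp

lemma sq_ip_haar_haar1 (J I : D) :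
    (ip (haar J) (haar1 I)) ^ 2 = if ival I ⊂ ival J then len I / len J else 0 := by
  have hI := len_pos I
  have hJ := len_pos J
  rcases lt_or_ge I.1 J.1 with hlt | hle
  · have h1 : I.1 ≤ (lc J).1 := by simp only [lc]; omega
    have h2 : I.1 ≤ (rc J).1 := by simp only [rc]; omega
    rcases subset_or_disjoint h1 with hl | hl
    · rw [if_pos (ssubset_of_subset_lc hl), ip_haar_haar1,
        v_disjoint (((disjoint_lc_rc J).symm.mono_right hl)), v_subset' hl, sq_helper hJ hI]
      field_simp
      ring
    · rcases subset_or_disjoint h2 with hr | hr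
      · rw [if_pos (ssubset_of_subset_rc hr), ip_haar_haar1,
          v_disjoint (((disjoint_lc_rc J).mono_right hr)), v_subset' hr, sq_helper hJ hI]
        field_simp
        ring
      · have hd : Disjoint (ival I) (ival J) := by
          rw [← union_lc_rc J]; exact Set.disjoint_union_right.2 ⟨hl, hr⟩
        have hns : ¬ ival I ⊂ ival J := by
          intro hc
          obtain ⟨x, hx⟩ := nonempty_ival I
          exact Set.disjoint_left.1 hd hx (hc.1 hx)
        rw [if_neg hns, ip_haar_haar1, v_disjoint hr.symm, v_disjoint hl.symm]
        ring
  · rcases subset_or_disjoint hle (I := J) (J := I) with hs | hs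
    · have hns : ¬ ival I ⊂ ival J := fun hc => hc.2 hs
      rw [if_neg hns, ip_haar_haar1, v_subset ((rc_subset J).trans hs),
        v_subset ((lc_subset J).trans hs), len_lc, len_rc]
      ring
    · have hns : ¬ ival I ⊂ ival J := by
        intro hc
        obtain ⟨x, hx⟩ := nonempty_ival I
        exact Set.disjoint_right.1 hs hx (hc.1 hx)
      rw [if_neg hns, ip_haar_haar1, v_disjoint (hs.mono_left (rc_subset J)),
        v_disjoint (hs.mono_left (lc_subset J))]
      ring

lemma l2normSq_haar_sum (s : Finset D) (d : D → ℝ) :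
    l2normSq (fun x => ∑ I ∈ s, d I * haar I x) = ∑ I ∈ s, (d I) ^ 2 := by
  unfold l2normSq
  have h1 : ∀ x : ℝ, (∑ I ∈ s, d I * haar I x) ^ 2
      = ∑ I ∈ s, ∑ J ∈ s, (d I * d J) * (haar I x * haar J x) := by
    intro x
    rw [sq, Finset.sum_mul_sum]
    exact Finset.sum_congr rfl fun I _ => Finset.sum_congr rfl fun J _ => by ring
  simp only [h1]
  rw [integral_finset_sum _ (fun I _ =>
    integrable_finset_sum _ (fun J _ => (integrable_haar_mul I J).const_mul _))]
  refine Finset.sum_congr rfl fun I hI => ?_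
  rw [integral_finset_sum _ (fun J _ => (integrable_haar_mul I J).const_mul _)]
  have h2 : ∀ J : D, ∫ x, (d I * d J) * (haar I x * haar J x) = (d I * d J) * ip (haar I) (haar J) :=
    fun J => integral_const_mul _ _
  simp only [h2, ip_haar, mul_ite, mul_one, mul_zero]
  rw [Finset.sum_ite_eq s I (fun J => d I * d J), if_pos hI, sq]

lemma ip_sum_left {s : Finset D} {F : D → ℝ → ℝ} {g : ℝ → ℝ}
    (h : ∀ J ∈ s, Integrable (fun x => F J x * g x)) :
    ip (fun x => ∑ J ∈ s, F J x) g = ∑ J ∈ s, ip (F J) g := by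
  unfold ip
  have h1 : ∀ x : ℝ, (∑ J ∈ s, F J x) * g x = ∑ J ∈ s, F J x * g x :=
    fun x => Finset.sum_mul _ _ _
  simp only [h1]
  exact integral_finset_sum _ h

section Prob
variable {μ : Measure (D → ℝ)}

lemma integrable_dirac' {f : ℝ → ℝ} (hf : Measurable f) (a : ℝ) :
    Integrable f (Measure.dirac a) := by
  refine Integrable.mono' (integrable_const ‖f a‖) hf.aestronglyMeasurable ?_
  rw [MeasureTheory.ae_dirac_eq]
  exact Filter.eventually_pure.2 le_rfl

lemma ae_pm (hμ : IsSignMeasure μ) (J : D) : ∀ᵐ σ ∂μ, σ J = 1 ∨ σ J = -1 := by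
  have hmeas : Measurable (fun σ : D → ℝ => σ J) := measurable_pi_apply J
  have hS : MeasurableSet ({1, -1} : Set ℝ) :=
    (measurableSet_singleton (-1)).insert 1
  have h0 : μ ((fun σ : D → ℝ => σ J) ⁻¹' ({1, -1} : Set ℝ)ᶜ) = 0 := by
    rw [← Measure.map_apply hmeas hS.compl, hμ.2.2 J]
    simp [Measure.dirac_apply' _ hS.compl, Set.indicator_apply]
  have hset : {σ : D → ℝ | ¬(σ J = 1 ∨ σ J = -1)}
      = (fun σ : D → ℝ => σ J) ⁻¹' ({1, -1} : Set ℝ)ᶜ := by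
    ext σ
    simp [Set.mem_preimage]
  rw [ae_iff, hset]
  exact h0

lemma abs_one_of_pm {x : ℝ} (h : x = 1 ∨ x = -1) : |x| = 1 := by
  rcases h with h | h <;> simp [h]

lemma integrable_eval_mul (hμ : IsSignMeasure μ) (J J' : D) :
    Integrable (fun σ => σ J * σ J') μ := by
  haveI := hμ.1
  refine Integrable.mono' (integrable_const 1)
    (((measurable_pi_apply J).mul (measurable_pi_apply J')).aestronglyMeasurable) ?_
  filter_upwards [ae_pm hμ J, ae_pm hμ J'] with σ h1 h2
  rw [Real.norm_eq_abs, abs_mul, abs_one_of_pm h1, abs_one_of_pm h2]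
  norm_num

lemma integrable_eval (hμ : IsSignMeasure μ) (J : D) :
    Integrable (fun σ => σ J) μ := by
  haveI := hμ.1
  refine Integrable.mono' (integrable_const 1)
    ((measurable_pi_apply J).aestronglyMeasurable) ?_
  filter_upwards [ae_pm hμ J] with σ h1
  rw [Real.norm_eq_abs, abs_one_of_pm h1]

lemma integral_eval_fun (hμ : IsSignMeasure μ) (J : D) (f : ℝ → ℝ) (hf : Measurable f) :
    ∫ σ, f (σ J) ∂μ = (f 1 + f (-1)) / 2 := by
  rw [← integral_map (measurable_pi_apply J).aemeasurable hf.aestronglyMeasurable, hμ.2.2 J,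
    integral_smul_measure,
    integral_add_measure (integrable_dirac' hf 1) (integrable_dirac' hf (-1)),
    integral_dirac, integral_dirac]
  simp only [smul_eq_mul, ENNReal.toReal_inv, ENNReal.toReal_ofNat]
  ring

lemma integral_eval_mul (hμ : IsSignMeasure μ) (J J' : D) :
    ∫ σ, σ J * σ J' ∂μ = if J = J' then 1 else 0 := by
  by_cases h : J = J'
  · subst h
    rw [if_pos rfl]
    have := integral_eval_fun hμ J (fun x => x * x) (measurable_id.mul measurable_id)
    norm_num at this
    exact this
  · rw [if_neg h]
    have hind : IndepFun (fun σ : D → ℝ => σ J) (fun σ : D → ℝ => σ J') μ :=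
      hμ.2.1.indepFun h
    have hz : ∫ σ, σ J ∂μ = 0 := by
      have := integral_eval_fun hμ J id measurable_id
      norm_num at this
      exact this
    have hz' : ∫ σ, σ J' ∂μ = 0 := by
      have := integral_eval_fun hμ J' id measurable_id
      norm_num at this
      exact this
    have := hind.integral_fun_mul_eq_mul_integral (integrable_eval hμ J).1 (integrable_eval hμ J').1
    rw [hz, hz', mul_zero] at this
    exact this

lemma sum_sq_expand (s : Finset D) (e : D → ℝ) : ∀ σ : D → ℝ,
    (∑ J ∈ s, σ J * e J) ^ 2 = ∑ J ∈ s, ∑ J' ∈ s, (e J * e J') * (σ J * σ J') := by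
  intro σ
  rw [sq, Finset.sum_mul_sum]
  exact Finset.sum_congr rfl fun J _ => Finset.sum_congr rfl fun J' _ => by ring

lemma integrable_sum_sq (hμ : IsSignMeasure μ) (s : Finset D) (e : D → ℝ) :
    Integrable (fun σ => (∑ J ∈ s, σ J * e J) ^ 2) μ := by
  simp only [sum_sq_expand]
  exact integrable_finset_sum _ fun J _ =>
    integrable_finset_sum _ fun J' _ => (integrable_eval_mul hμ J J').const_mul _

lemma integral_sum_sq (hμ : IsSignMeasure μ) (s : Finset D) (e : D → ℝ) :
    ∫ σ, (∑ J ∈ s, σ J * e J) ^ 2 ∂μ = ∑ J ∈ s, (e J) ^ 2 := by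
  simp only [sum_sq_expand]
  rw [integral_finset_sum _ (fun J _ =>
    integrable_finset_sum _ (fun J' _ => (integrable_eval_mul hμ J J').const_mul _))]
  refine Finset.sum_congr rfl fun J hJ => ?_
  rw [integral_finset_sum _ (fun J' _ => (integrable_eval_mul hμ J J').const_mul _)]
  have h2 : ∀ J' : D, ∫ σ, (e J * e J') * (σ J * σ J') ∂μ
      = (e J * e J') * ∫ σ, σ J * σ J' ∂μ := fun J' => integral_const_mul _ _
  simp only [h2, integral_eval_mul hμ, mul_ite, mul_one, mul_zero]
  rw [Finset.sum_ite_eq s J (fun J' => e J * e J'), if_pos hJ, sq]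

end Prob
lemma ip_const_mul (c : ℝ) (f g : ℝ → ℝ) : ip (fun x => c * f x) g = c * ip f g := by
  unfold ip
  have h : ∀ x : ℝ, (c * f x) * g x = c * (f x * g x) := fun x => mul_assoc _ _ _
  simp only [h]
  exact integral_const_mul _ _

lemma hfun_false : hfun false = haar := rfl
lemma hfun_true : hfun true = haar1 := rfl

/-- `𝔼 ‖P^{0,1}_b (P^{σ,0,0}_β φ)‖₂²
= ∑_J ⟨φ, h_J⟩² β_J² ∑_{I ⊊ J} b_I² |I|/|J|`. -/
theorem statement6 (b β : D →₀ ℝ) (μ : Measure (D → ℝ)) (hμ : IsSignMeasure μ)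
    (φ : ℝ → ℝ) (hφ : MemLp φ 2 volume) :
    ∫ σ, l2normSq (P false true b (Psig σ false false β φ)) ∂μ =
      ∑ J ∈ β.support, (ip φ (haar J)) ^ 2 * (β J) ^ 2 *
        ∑ I ∈ b.support.filter (fun I => ival I ⊂ ival J),
          (b I) ^ 2 * (len I / len J) := by
  haveI := hμ.1
  -- Step 1: the inner product of the randomized paraproduct with haar1 I
  have hC : ∀ (σ : D → ℝ) (I : D), ip (Psig σ false false β φ) (hfun true I)
      = ∑ J ∈ β.support, σ J * ((β J * ip φ (haar J)) * ip (haar J) (haar1 I)) := by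
    intro σ I
    rw [hfun_true]
    unfold Psig
    rw [ip_sum_left (fun J _ => ?_)]
    · refine Finset.sum_congr rfl fun J _ => ?_
      rw [hfun_false]
      rw [ip_const_mul, ip_const_mul]
    · have h3 : ∀ x : ℝ, (σ J * (β J * ip φ (hfun false J) * hfun false J x)) * haar1 I x
          = (σ J * (β J * ip φ (haar J))) * (haar J x * haar1 I x) := by
        intro x; rw [hfun_false]; ring
      simp only [h3]
      exact (integrable_haar_haar1 J I).const_mul _
  -- Step 2: pointwise L² norm
  have hl2 : ∀ σ : D → ℝ, l2normSq (P false true b (Psig σ false false β φ))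
      = ∑ I ∈ b.support,
          (b I * ∑ J ∈ β.support, σ J * ((β J * ip φ (haar J)) * ip (haar J) (haar1 I))) ^ 2 := by
    intro σ
    have hP : P false true b (Psig σ false false β φ)
        = fun x => ∑ I ∈ b.support,
            (b I * ip (Psig σ false false β φ) (hfun true I)) * haar I x := rfl
    rw [hP, l2normSq_haar_sum]
    exact Finset.sum_congr rfl fun I _ => by rw [hC σ I]
  simp only [hl2]
  -- Step 3: integrate in σ
  have hint : ∀ I ∈ b.support, Integrable (fun σ : D → ℝ =>
      (b I * ∑ J ∈ β.support, σ J * ((β J * ip φ (haar J)) * ip (haar J) (haar1 I))) ^ 2) μ := by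
    intro I _
    simp only [mul_pow]
    exact (integrable_sum_sq hμ β.support _).const_mul _
  rw [integral_finset_sum _ hint]
  have h4 : ∀ I : D, ∫ σ, (b I * ∑ J ∈ β.support,
      σ J * ((β J * ip φ (haar J)) * ip (haar J) (haar1 I))) ^ 2 ∂μ
      = (b I) ^ 2 * ∑ J ∈ β.support, ((β J * ip φ (haar J)) * ip (haar J) (haar1 I)) ^ 2 := by
    intro I
    have he : ∀ σ : D → ℝ, (b I * ∑ J ∈ β.support,
        σ J * ((β J * ip φ (haar J)) * ip (haar J) (haar1 I))) ^ 2
        = (b I) ^ 2 * (∑ J ∈ β.support,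
            σ J * ((β J * ip φ (haar J)) * ip (haar J) (haar1 I))) ^ 2 :=
      fun σ => mul_pow _ _ _
    simp only [he]
    rw [integral_const_mul, integral_sum_sq hμ]
  simp only [h4]
  -- Step 4: algebra
  simp only [Finset.mul_sum]
  rw [Finset.sum_comm]
  refine Finset.sum_congr rfl fun J hJ => ?_
  have h5 : ∀ I : D, (b I) ^ 2 * ((β J * ip φ (haar J)) * ip (haar J) (haar1 I)) ^ 2
      = (ip φ (haar J)) ^ 2 * (β J) ^ 2 *
          (if ival I ⊂ ival J then (b I) ^ 2 * (len I / len J) else 0) := by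
    intro I
    rw [mul_pow, mul_pow, sq_ip_haar_haar1]
    split_ifs with h
    · ring
    · ring
  rw [Finset.sum_filter]
  refine Finset.sum_congr rfl fun I _ => ?_
  rw [h5 I]
  split_ifs with h <;> ring

end RandomParaproducts
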